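/- Let G be a finite simple graph on a vertex set W, let m ≥ 1 be an integer, let G' be the m-blowup of G, and let V1, V2 ⊆ W × {1,…,m} satisfy V1 ∪ V2 = W × {1,…,m}. Suppose u, v ∈ W are distinct vertices such that both cliques C_u and C_v intersect both V1 ∖ V2 and V1 ∩ V2. Then there exist sets V1*, V2* with V1* ∪ V2* = W × {1,…,m}, |V1*| = |V1|, |V2*| = |V2|, such that the number of edges of G' between V1* ∖ V2* and V2* ∖ V1* is at most the number of edges of G' between V1 ∖ V2 and V2 ∖ V1, at least one of C_u, C_v does not intersect both V1* ∖ V2* and V1* ∩ V2*, every clique C_w with w ∉ {u, v} has the same intersection with each of V1* ∖ V2*, V2* ∖ V1*, V1* ∩ V2* as with V1 ∖ V2, V2 ∖ V1, V1 ∩ V2 respectively, and C_u, C_v have the same intersection with V2* ∖ V1* as with V2 ∖ V1. -/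

import Mathlib

open Finset

/-- The cost of a (possibly replicated) bipartition `(V1, V2)` of the vertex set of a simple
graph `G`: the number of edges of `G` having one endpoint in `V1 \ V2` and the other in
`V2 \ V1`. -/
def repCost {V : Type*} [Fintype V] [DecidableEq V] (G : SimpleGraph V) [DecidableRel G.Adj]
    (V1 V2 : Finset V) : ℕ :=
  (G.edgeFinset.filter (fun e => ∃ a ∈ V1 \ V2, ∃ b ∈ V2 \ V1, e = s(a, b))).card

/-- The `m`-blowup of a simple graph `G` on `W`: the graph on `W × Fin m` where `(u, i)` and
`(v, j)` are adjacent iff either `u = v` and `i ≠ j`, or `u` and `v` are adjacent in `G`. -/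
def blowup {W : Type*} (G : SimpleGraph W) (m : ℕ) : SimpleGraph (W × Fin m) where
  Adj x y := (x.1 = y.1 ∧ x.2 ≠ y.2) ∨ G.Adj x.1 y.1
  symm := by
    constructor
    intro x y h
    rcases h with ⟨h1, h2⟩ | h
    · exact Or.inl ⟨h1.symm, h2.symm⟩
    · exact Or.inr h.symm
  loopless := by
    constructor
    intro x h
    rcases h with ⟨_, h2⟩ | h
    · exact h2 rfl
    · exact G.loopless.irrefl _ h

instance {W : Type*} [DecidableEq W] (G : SimpleGraph W) [DecidableRel G.Adj] (m : ℕ) :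
    DecidableRel (blowup G m).Adj :=
  fun x y => inferInstanceAs (Decidable ((x.1 = y.1 ∧ x.2 ≠ y.2) ∨ G.Adj x.1 y.1))

/-- The clique of a vertex `u` in the `m`-blowup: the set `C_u = {u} × {1, …, m}`. -/
def cliqueOf {W : Type*} [Fintype W] [DecidableEq W] (m : ℕ) (u : W) : Finset (W × Fin m) :=
  Finset.univ.filter (fun x => x.1 = u)

lemma repCost_eq_sum {V : Type*} [Fintype V] [DecidableEq V] (G : SimpleGraph V)
    [DecidableRel G.Adj] (V1 V2 : Finset V) :
    repCost G V1 V2 =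
      ∑ x ∈ V1 \ V2, ((V2 \ V1).filter (fun y => G.Adj x y)).card := by
  classical
  rw [← Finset.card_sigma]
  unfold repCost
  symm
  apply Finset.card_bij (fun (p : (_ : V) × V) _ => s(p.1, p.2))
  · rintro ⟨x, y⟩ hp
    simp only [Finset.mem_sigma, Finset.mem_filter] at hp
    simp only [Finset.mem_filter, SimpleGraph.mem_edgeFinset, SimpleGraph.mem_edgeSet]
    exact ⟨hp.2.2, x, hp.1, y, hp.2.1, rfl⟩
  · rintro ⟨x, y⟩ hp ⟨x', y'⟩ hp' h
    simp only [Finset.mem_sigma, Finset.mem_filter] at hp hp'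
    rw [Sym2.eq_iff] at h
    rcases h with ⟨rfl, rfl⟩ | ⟨rfl, rfl⟩
    · rfl
    · exfalso
      have h1 := hp.1
      have h2 := hp'.2.1
      simp only [Finset.mem_sdiff] at h1 h2
      exact h1.2 h2.1
  · intro e he
    simp only [Finset.mem_filter] at he
    obtain ⟨he1, a, ha, b, hb, rfl⟩ := he
    refine ⟨⟨a, b⟩, ?_, rfl⟩
    simp only [Finset.mem_sigma, Finset.mem_filter]
    exact ⟨ha, hb, by rwa [SimpleGraph.mem_edgeFinset, SimpleGraph.mem_edgeSet] at he1⟩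

lemma key_stmt7 {W : Type*} [Fintype W] [DecidableEq W]
    (G : SimpleGraph W) [DecidableRel G.Adj]
    (m : ℕ)
    (V1 V2 : Finset (W × Fin m)) (hcover : V1 ∪ V2 = Finset.univ)
    (u v : W) (huv : u ≠ v)
    (hαβ : ((V2 \ V1).filter (fun y => y.1 = v ∨ G.Adj v y.1)).card ≤
           ((V2 \ V1).filter (fun y => y.1 = u ∨ G.Adj u y.1)).card) :
    ∃ W1 W2 : Finset (W × Fin m),
      W1 ∪ W2 = Finset.univ ∧ W1.card = V1.card ∧ W2.card = V2.card ∧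
      repCost (blowup G m) W1 W2 ≤ repCost (blowup G m) V1 V2 ∧
      (¬ ((cliqueOf m u ∩ (W1 \ W2)).Nonempty ∧ (cliqueOf m u ∩ (W1 ∩ W2)).Nonempty) ∨
       ¬ ((cliqueOf m v ∩ (W1 \ W2)).Nonempty ∧ (cliqueOf m v ∩ (W1 ∩ W2)).Nonempty)) ∧
      (∀ w : W, w ≠ u → w ≠ v →
        cliqueOf m w ∩ (W1 \ W2) = cliqueOf m w ∩ (V1 \ V2) ∧
        cliqueOf m w ∩ (W2 \ W1) = cliqueOf m w ∩ (V2 \ V1) ∧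
        cliqueOf m w ∩ (W1 ∩ W2) = cliqueOf m w ∩ (V1 ∩ V2)) ∧
      cliqueOf m u ∩ (W2 \ W1) = cliqueOf m u ∩ (V2 \ V1) ∧
      cliqueOf m v ∩ (W2 \ W1) = cliqueOf m v ∩ (V2 \ V1) := by
  classical
  set A := cliqueOf m u ∩ (V1 \ V2) with hAdef
  set D := cliqueOf m v ∩ (V1 ∩ V2) with hDdef
  set k := min A.card D.card with hkdef
  obtain ⟨S, hSA, hScard⟩ := Finset.exists_subset_card_eq (s := A) (n := k) (min_le_left _ _)
  obtain ⟨T, hTD, hTcard⟩ := Finset.exists_subset_card_eq (s := D) (n := k) (min_le_right _ _)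
  have hSmem : ∀ x ∈ S, x.1 = u ∧ x ∈ V1 ∧ x ∉ V2 := by
    intro x hx
    have h := hSA hx
    simp only [hAdef, cliqueOf, Finset.mem_inter, Finset.mem_filter, Finset.mem_univ,
      true_and, Finset.mem_sdiff] at h
    exact ⟨h.1, h.2.1, h.2.2⟩
  have hTmem : ∀ x ∈ T, x.1 = v ∧ x ∈ V1 ∧ x ∈ V2 := by
    intro x hx
    have h := hTD hx
    simp only [hDdef, cliqueOf, Finset.mem_inter, Finset.mem_filter, Finset.mem_univ,
      true_and] at h
    exact ⟨h.1, h.2.1, h.2.2⟩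
  have hST : ∀ x ∈ S, x ∉ T := by
    intro x hx ht
    exact huv (((hSmem x hx).1.symm.trans (hTmem x ht).1))
  -- Set identities
  have hY : ((V2 ∪ S) \ T) \ V1 = V2 \ V1 := by
    ext x
    simp only [Finset.mem_sdiff, Finset.mem_union]
    constructor
    · rintro ⟨⟨h1 | h1, _⟩, h3⟩
      · exact ⟨h1, h3⟩
      · exact absurd (hSmem x h1).2.1 h3
    · rintro ⟨h1, h2⟩
      exact ⟨⟨Or.inl h1, fun ht => h2 (hTmem x ht).2.1⟩, h2⟩
  have hX : V1 \ ((V2 ∪ S) \ T) = ((V1 \ V2) \ S) ∪ T := by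
    ext x
    simp only [Finset.mem_sdiff, Finset.mem_union]
    constructor
    · rintro ⟨h1, h2⟩
      by_cases ht : x ∈ T
      · exact Or.inr ht
      · push_neg at h2
        exact Or.inl ⟨⟨h1, fun hv => ht (h2 (Or.inl hv))⟩, fun hs => ht (h2 (Or.inr hs))⟩
    · rintro (⟨⟨h1, h2⟩, h3⟩ | ht)
      · exact ⟨h1, fun hc => hc.1.elim h2 h3⟩
      · exact ⟨(hTmem x ht).2.1, fun hc => hc.2 ht⟩
  have hI : V1 ∩ ((V2 ∪ S) \ T) = ((V1 ∩ V2) \ T) ∪ S := by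
    ext x
    simp only [Finset.mem_inter, Finset.mem_sdiff, Finset.mem_union]
    constructor
    · rintro ⟨h1, h2 | h2, h3⟩
      · exact Or.inl ⟨⟨h1, h2⟩, h3⟩
      · exact Or.inr h2
    · rintro (⟨⟨h1, h2⟩, h3⟩ | hs)
      · exact ⟨h1, Or.inl h2, h3⟩
      · exact ⟨(hSmem x hs).2.1, Or.inr hs, hST x hs⟩
  refine ⟨V1, (V2 ∪ S) \ T, ?_, rfl, ?_, ?_, ?_, ?_, ?_, ?_⟩
  · -- cover
    ext x
    simp only [Finset.mem_union, Finset.mem_sdiff, Finset.mem_univ, iff_true]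
    by_cases h1 : x ∈ V1
    · exact Or.inl h1
    · have h2 : x ∈ V2 := by
        have hx := Finset.mem_univ x
        rw [← hcover, Finset.mem_union] at hx
        tauto
      exact Or.inr ⟨Or.inl h2, fun ht => h1 (hTmem x ht).2.1⟩
  · -- card
    have hSV2 : Disjoint V2 S := by
      rw [Finset.disjoint_right]
      intro x hx
      exact (hSmem x hx).2.2
    have hTsub : T ⊆ V2 ∪ S := fun x hx => Finset.mem_union_left _ (hTmem x hx).2.2
    rw [Finset.card_sdiff_of_subset hTsub, Finset.card_union_of_disjoint hSV2, hScard, hTcard,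
      Nat.add_sub_cancel]
  · -- cost
    rw [repCost_eq_sum, repCost_eq_sum, hX, hY]
    set f : W × Fin m → ℕ :=
      fun x => ((V2 \ V1).filter (fun y => (blowup G m).Adj x y)).card with hf
    have hadj : ∀ a b : W × Fin m,
        (blowup G m).Adj a b ↔ ((a.1 = b.1 ∧ a.2 ≠ b.2) ∨ G.Adj a.1 b.1) := fun a b => Iff.rfl
    have hfS : ∀ x ∈ S, f x = ((V2 \ V1).filter (fun y => y.1 = u ∨ G.Adj u y.1)).card := by
      intro x hx
      obtain ⟨hx1, hxV1, hxV2⟩ := hSmem x hx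
      simp only [hf]
      congr 1
      ext y
      simp only [Finset.mem_filter, Finset.mem_sdiff, and_congr_right_iff, and_imp]
      intro hy2 hy1
      rw [hadj]
      constructor
      · rintro (⟨h1, _⟩ | h1)
        · exact Or.inl (h1.symm.trans hx1)
        · rw [hx1] at h1; exact Or.inr h1
      · rintro (h | h)
        · left
          refine ⟨hx1.trans h.symm, fun he => ?_⟩
          have hxy : x = y := Prod.ext (hx1.trans h.symm) he
          rw [hxy] at hxV2
          exact hxV2 hy2
        · right; rw [hx1]; exact h
    have hfT : ∀ x ∈ T, f x = ((V2 \ V1).filter (fun y => y.1 = v ∨ G.Adj v y.1)).card := by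
      intro x hx
      obtain ⟨hx1, hxV1, hxV2⟩ := hTmem x hx
      simp only [hf]
      congr 1
      ext y
      simp only [Finset.mem_filter, Finset.mem_sdiff, and_congr_right_iff, and_imp]
      intro hy2 hy1
      rw [hadj]
      constructor
      · rintro (⟨h1, _⟩ | h1)
        · exact Or.inl (h1.symm.trans hx1)
        · rw [hx1] at h1; exact Or.inr h1
      · rintro (h | h)
        · left
          refine ⟨hx1.trans h.symm, fun he => ?_⟩
          have hxy : x = y := Prod.ext (hx1.trans h.symm) he
          rw [hxy] at hxV1
          exact hy1 hxV1
        · right; rw [hx1]; exact h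
    have hdisj : Disjoint ((V1 \ V2) \ S) T := by
      rw [Finset.disjoint_right]
      intro x hx
      have h2 := (hTmem x hx).2.2
      simp only [Finset.mem_sdiff, not_and, not_not]
      tauto
    have hSsub : S ⊆ V1 \ V2 := by
      intro x hx
      simp only [Finset.mem_sdiff]
      exact ⟨(hSmem x hx).2.1, (hSmem x hx).2.2⟩
    have hsplit := Finset.sum_sdiff (f := f) hSsub
    have h1 : ∑ x ∈ S, f x = k * ((V2 \ V1).filter (fun y => y.1 = u ∨ G.Adj u y.1)).card := by
      rw [Finset.sum_congr rfl hfS, Finset.sum_const, hScard, smul_eq_mul]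
    have h2 : ∑ x ∈ T, f x = k * ((V2 \ V1).filter (fun y => y.1 = v ∨ G.Adj v y.1)).card := by
      rw [Finset.sum_congr rfl hfT, Finset.sum_const, hTcard, smul_eq_mul]
    rw [Finset.sum_union hdisj, h2, ← hsplit, h1]
    exact Nat.add_le_add_left (Nat.mul_le_mul_left k hαβ) _
  · -- disjunction
    rcases le_total A.card D.card with hk | hk
    · left
      rintro ⟨⟨x, hx⟩, -⟩
      have hSeqA : S = A :=
        Finset.eq_of_subset_of_card_le hSA (by rw [hScard, hkdef, min_eq_left hk])
      rw [hX] at hx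
      simp only [Finset.mem_inter, Finset.mem_union, Finset.mem_sdiff] at hx
      obtain ⟨hxu, hmem⟩ := hx
      rcases hmem with ⟨⟨hm1, hm2⟩, hm3⟩ | ht
      · refine hm3 ?_
        rw [hSeqA, hAdef]
        simp only [Finset.mem_inter, cliqueOf, Finset.mem_filter, Finset.mem_univ, true_and,
          Finset.mem_sdiff]
        have : x.1 = u := by
          simpa [cliqueOf] using hxu
        exact ⟨this, hm1, hm2⟩
      · have h1 : x.1 = v := (hTmem x ht).1
        have h2 : x.1 = u := by simpa [cliqueOf] using hxu
        exact huv (h2.symm.trans h1)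
    · right
      rintro ⟨-, ⟨x, hx⟩⟩
      have hTeqD : T = D :=
        Finset.eq_of_subset_of_card_le hTD (by rw [hTcard, hkdef, min_eq_right hk])
      rw [hI] at hx
      simp only [Finset.mem_inter, Finset.mem_union, Finset.mem_sdiff] at hx
      obtain ⟨hxv, hmem⟩ := hx
      rcases hmem with ⟨⟨hm1, hm2⟩, hm3⟩ | hs
      · refine hm3 ?_
        rw [hTeqD, hDdef]
        simp only [Finset.mem_inter, cliqueOf, Finset.mem_filter, Finset.mem_univ, true_and]
        have : x.1 = v := by simpa [cliqueOf] using hxv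
        exact ⟨this, hm1, hm2⟩
      · have h1 : x.1 = u := (hSmem x hs).1
        have h2 : x.1 = v := by simpa [cliqueOf] using hxv
        exact huv (h1.symm.trans h2)
  · -- other cliques
    intro w hwu hwv
    refine ⟨?_, by rw [hY], ?_⟩
    · rw [hX]
      ext x
      simp only [Finset.mem_inter, cliqueOf, Finset.mem_filter, Finset.mem_univ, true_and,
        Finset.mem_union, Finset.mem_sdiff]
      constructor
      · rintro ⟨hxw, ⟨h1, _⟩ | h1⟩
        · exact ⟨hxw, h1⟩
        · exact absurd ((hTmem x h1).1) (by rw [hxw]; exact hwv)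
      · rintro ⟨hxw, h1⟩
        exact ⟨hxw, Or.inl ⟨h1, fun hs => hwu (hxw.symm.trans (hSmem x hs).1)⟩⟩
    · rw [hI]
      ext x
      simp only [Finset.mem_inter, cliqueOf, Finset.mem_filter, Finset.mem_univ, true_and,
        Finset.mem_union, Finset.mem_sdiff]
      constructor
      · rintro ⟨hxw, ⟨⟨h1, h2⟩, _⟩ | h1⟩
        · exact ⟨hxw, h1, h2⟩
        · exact absurd ((hSmem x h1).1) (by rw [hxw]; exact hwu)
      · rintro ⟨hxw, h1, h2⟩
        exact ⟨hxw, Or.inl ⟨⟨h1, h2⟩, fun ht => hwv (hxw.symm.trans (hTmem x ht).1)⟩⟩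
  · rw [hY]
  · rw [hY]

/-- Let `G` be a finite simple graph on a vertex set `W`, let `m ≥ 1`, let `G'`
be the `m`-blowup of `G`, and let `V1, V2 ⊆ W × {1,…,m}` satisfy `V1 ∪ V2 = W × {1,…,m}`.
Suppose `u, v ∈ W` are distinct vertices such that both cliques `C_u` and `C_v` intersect both
`V1 ∖ V2` and `V1 ∩ V2`. Then there exist sets `V1*, V2*` with `V1* ∪ V2* = W × {1,…,m}`,
`|V1*| = |V1|`, `|V2*| = |V2|`, such that the number of edges of `G'` between `V1* ∖ V2*` and
`V2* ∖ V1*` is at most the number of edges of `G'` between `V1 ∖ V2` and `V2 ∖ V1`, at least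
one of `C_u, C_v` does not intersect both `V1* ∖ V2*` and `V1* ∩ V2*`, every clique `C_w` with
`w ∉ {u, v}` has the same intersection with each of `V1* ∖ V2*`, `V2* ∖ V1*`, `V1* ∩ V2*` as
with `V1 ∖ V2`, `V2 ∖ V1`, `V1 ∩ V2` respectively, and `C_u, C_v` have the same intersection
with `V2* ∖ V1*` as with `V2 ∖ V1`. -/
theorem stmt7 {W : Type*} [Fintype W] [DecidableEq W]
    (G : SimpleGraph W) [DecidableRel G.Adj]
    (m : ℕ) (hm : 1 ≤ m)
    (V1 V2 : Finset (W × Fin m)) (hcover : V1 ∪ V2 = Finset.univ)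
    (u v : W) (huv : u ≠ v)
    (hu1 : (cliqueOf m u ∩ (V1 \ V2)).Nonempty) (hu2 : (cliqueOf m u ∩ (V1 ∩ V2)).Nonempty)
    (hv1 : (cliqueOf m v ∩ (V1 \ V2)).Nonempty) (hv2 : (cliqueOf m v ∩ (V1 ∩ V2)).Nonempty) :
    ∃ W1 W2 : Finset (W × Fin m),
      W1 ∪ W2 = Finset.univ ∧ W1.card = V1.card ∧ W2.card = V2.card ∧
      repCost (blowup G m) W1 W2 ≤ repCost (blowup G m) V1 V2 ∧
      (¬ ((cliqueOf m u ∩ (W1 \ W2)).Nonempty ∧ (cliqueOf m u ∩ (W1 ∩ W2)).Nonempty) ∨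
       ¬ ((cliqueOf m v ∩ (W1 \ W2)).Nonempty ∧ (cliqueOf m v ∩ (W1 ∩ W2)).Nonempty)) ∧
      (∀ w : W, w ≠ u → w ≠ v →
        cliqueOf m w ∩ (W1 \ W2) = cliqueOf m w ∩ (V1 \ V2) ∧
        cliqueOf m w ∩ (W2 \ W1) = cliqueOf m w ∩ (V2 \ V1) ∧
        cliqueOf m w ∩ (W1 ∩ W2) = cliqueOf m w ∩ (V1 ∩ V2)) ∧
      cliqueOf m u ∩ (W2 \ W1) = cliqueOf m u ∩ (V2 \ V1) ∧
      cliqueOf m v ∩ (W2 \ W1) = cliqueOf m v ∩ (V2 \ V1) := by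
  classical
  rcases le_total ((V2 \ V1).filter (fun y => y.1 = v ∨ G.Adj v y.1)).card
      ((V2 \ V1).filter (fun y => y.1 = u ∨ G.Adj u y.1)).card with h | h
  · exact key_stmt7 G m V1 V2 hcover u v huv h
  · obtain ⟨W1, W2, c1, c2, c3, c4, c5, c6, c7, c8⟩ :=
      key_stmt7 G m V1 V2 hcover v u huv.symm h
    exact ⟨W1, W2, c1, c2, c3, c4, c5.symm, fun w hwu hwv => c6 w hwv hwu, c8, c7⟩
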